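/- Let Γ = (V, E, s, r) be a finite directed graph with a specialization γ, and let W ⊆ V be a nonempty subset. For every arrival path p in W one has sd(p) ≤ |V|. -/

import Mathlib

open Classical

/-- `sd p` is the length of the longest special suffix of the path `p`
(given as a list of edges): if `p = e₁⋯eₙ` and `i` is minimal such that the suffix
`e_{i+1}⋯eₙ` is special, then `sd p = n - i`. -/
noncomputable def sd {E : Type*} (special : E → Prop) (p : List E) : ℕ :=
  (p.reverse.takeWhile fun e => decide (special e)).length

/-- In a finite directed graph `(V, E, s, r)` with a specialization `γ`
and a nonempty subset `W ⊆ V`, every arrival path `p` in `W` (a path, given by its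
source vertex `v` and list of edges, whose range lies in `W` and none of whose edge
sources lies in `W`) satisfies `sd p ≤ |V|`. -/
theorem sd_of_arrival_path_le_card
    {V E : Type*} [Fintype V] [Fintype E]
    (s r : E → V)
    (γ : {v : V // ∃ e, s e = v} → E)
    (hγ : ∀ v, s (γ v) = v.1)
    (W : Set V) (hW : W.Nonempty)
    (v : V) (p : List E)
    (hsrc : ∀ h : p ≠ [], s (p.head h) = v)
    (hchain : p.Chain' (fun e f => r e = s f))
    (hrange : (p.getLast?.map r).getD v ∈ W)
    (harrival : ∀ e ∈ p, s e ∉ W) :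
    sd (fun e => ∃ u, γ u = e) p ≤ Fintype.card V := by
  by_contra hlt
  push_neg at hlt
  set special : E → Prop := fun e => ∃ u, γ u = e with hspecial
  have hlt' : Fintype.card V <
      (p.reverse.takeWhile fun e => @decide (special e) (Classical.propDecidable _)).length := hlt
  obtain ⟨q, hqd⟩ : ∃ q : List E,
      (p.reverse.takeWhile fun e => @decide (special e) (Classical.propDecidable _)) = q :=
    ⟨_, rfl⟩
  rw [hqd] at hlt'
  have hn : Fintype.card V < q.length := hlt'
  have gc : ∀ (i j : ℕ) (hi : i < q.length) (hj : j < q.length), i = j →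
      q[i]'hi = q[j]'hj := by
    intro i j hi hj h; subst h; rfl
  have gp : ∀ (i j : ℕ) (hi : i < p.length) (hj : j < p.length), i = j →
      p[i]'hi = p[j]'hj := by
    intro i j hi hj h; subst h; rfl
  have huniq : ∀ e f : E, special e → special f → s e = s f → e = f := by
    rintro e f ⟨u, rfl⟩ ⟨u', rfl⟩ hs
    have : u = u' := Subtype.ext (by rw [← hγ u, ← hγ u', hs])
    rw [this]
  have hqspec : ∀ e ∈ q, special e := by
    intro e he
    rw [← hqd] at he
    have := List.mem_takeWhile_imp he
    simpa using this
  have hqpre : q <+: p.reverse := hqd ▸ List.takeWhile_prefix _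
  have hprev : p.reverse.Chain' (fun f e => r e = s f) := by
    unfold List.Chain'; rw [List.isChain_reverse]; exact hchain
  have hqchain : q.Chain' (fun f e => r e = s f) := hprev.prefix hqpre
  have hidx : ∀ i (h : i < q.length - 1),
      r (q[i+1]'(by omega)) = s (q[i]'(by omega)) := by
    unfold List.Chain' at hqchain; rw [List.isChain_iff_getElem] at hqchain
    intro i h
    simpa using hqchain i (by omega)
  have hlenp : q.length ≤ p.length := by simpa using hqpre.length_le
  obtain ⟨i, j, hne, hij⟩ :=
    Fintype.exists_ne_map_eq_of_card_lt (fun i : Fin q.length => s (q.get i))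
      (by simpa using hn)
  obtain ⟨a, b, hab, ha, hb, hsab⟩ :
      ∃ (a b : ℕ) (_ : a < b) (ha : a < q.length) (hb : b < q.length),
        s (q[a]'ha) = s (q[b]'hb) := by
    rcases lt_or_gt_of_ne (Fin.val_ne_of_ne hne) with h | h
    · exact ⟨i, j, h, i.2, j.2, by simpa using hij⟩
    · exact ⟨j, i, h, j.2, i.2, by simpa using hij.symm⟩
  have hqab : q[a]'ha = q[b]'hb :=
    huniq _ _ (hqspec _ (List.getElem_mem _)) (hqspec _ (List.getElem_mem _)) hsab
  have key : ∀ m, m ≤ a → q[a - m]'(by omega) = q[b - m]'(by omega) := by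
    intro m
    induction m with
    | zero => intro _; exact hqab
    | succ m ih =>
      intro hm
      have ihm := ih (by omega)
      have h1 := hidx (a - m - 1) (by omega)
      have h2 := hidx (b - m - 1) (by omega)
      have h1' : r (q[a - m]'(by omega)) = s (q[a - m - 1]'(by omega)) :=
        (congrArg r (gc (a - m) (a - m - 1 + 1) (by omega) (by omega) (by omega))).trans h1
      have h2' : r (q[b - m]'(by omega)) = s (q[b - m - 1]'(by omega)) :=
        (congrArg r (gc (b - m) (b - m - 1 + 1) (by omega) (by omega) (by omega))).trans h2
      have hs' : s (q[a - m - 1]'(by omega)) = s (q[b - m - 1]'(by omega)) := by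
        rw [← h1', ← h2', ihm]
      have heq := huniq _ _ (hqspec _ (List.getElem_mem _)) (hqspec _ (List.getElem_mem _)) hs'
      exact (gc _ _ (by omega) (by omega) (by omega)).trans
        (heq.trans (gc _ _ (by omega) (by omega) (by omega)))
  have h0 : q[0]'(by omega) = q[b - a]'(by omega) :=
    (gc _ _ (by omega) (by omega) (by omega)).trans (key a le_rfl)
  have hpne : p ≠ [] := by
    intro h
    rw [h] at hlenp
    simp only [List.length_nil, Nat.le_zero] at hlenp
    omega
  have hq0 : q[0]'(by omega) = p.getLast hpne := by
    rw [hqpre.getElem (by omega), List.getElem_reverse, List.getLast_eq_getElem]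
    exact gp _ _ (by simpa using Nat.sub_lt (by omega) one_pos) (by omega) (by omega)
  have hrW : r (q[0]'(by omega)) ∈ W := by
    rw [hq0]
    rw [List.getLast?_eq_getLast_of_ne_nil hpne] at hrange
    simpa using hrange
  have hd1 := hidx (b - a - 1) (by omega)
  have hd1' : r (q[b - a]'(by omega)) = s (q[b - a - 1]'(by omega)) :=
    (congrArg r (gc (b - a) (b - a - 1 + 1) (by omega) (by omega) (by omega))).trans hd1
  have hmem : q[b - a - 1]'(by omega) ∈ p := by
    have h1 : q[b - a - 1]'(by omega) ∈ q := List.getElem_mem _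
    exact (List.mem_reverse).1 (hqpre.subset h1)
  have : s (q[b - a - 1]'(by omega)) ∈ W := by
    rw [← hd1', ← h0]; exact hrW
  exact harrival _ hmem this
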